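/- (Stieltjes transform of the Marčenko–Pastur law on the negative real axis.) Fix y > 0 and set a = (1−√y)², b = (1+√y)². Let F_y be the Marčenko–Pastur distribution with parameter y, i.e., the probability measure on ℝ with density f_y(x) = (2π x y)⁻¹ √((b−x)(x−a)) on [a,b] and, when y > 1, an additional point mass of weight 1 − 1/y at 0. Then for every σ > 0, ∫ (x+σ)⁻¹ dF_y(x) = m(σ), where m(σ) = −(1+σ−y−√((1+y+σ)²−4y))/(2yσ). -/

import Mathlib

open MeasureTheory Real

open scoped NNReal ENNReal

lemma MP.aux_int_inv (p q : ℝ) (hq : 0 < q) (hpq : q < p) :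
    ∫ θ in (-(π/2))..(π/2), (p + q * Real.sin θ)⁻¹
      = π / Real.sqrt (p^2 - q^2) := by
  set D : ℝ := Real.sqrt (p^2 - q^2) with hDdef
  have hp : 0 < p := hq.trans hpq
  have hD2 : D^2 = p^2 - q^2 := Real.sq_sqrt (by nlinarith)
  have hD : 0 < D := Real.sqrt_pos.2 (by nlinarith)
  set F : ℝ → ℝ := fun θ => (2/D) * Real.arctan ((p * Real.tan (θ/2) + q)/D) with hF
  have hpos : ∀ θ : ℝ, 0 < p + q * Real.sin θ := by
    intro θ
    nlinarith [Real.neg_one_le_sin θ, Real.sin_le_one θ]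
  have hderiv : ∀ θ ∈ Set.uIcc (-(π/2)) (π/2),
      HasDerivAt F ((p + q * Real.sin θ)⁻¹) θ := by
    intro θ hθ
    rw [Set.uIcc_of_le (by linarith [Real.pi_pos] : -(π/2) ≤ π/2)] at hθ
    have hθ2 : θ/2 ∈ Set.Ioo (-(π/2)) (π/2) := by
      constructor
      · nlinarith [hθ.1, Real.pi_pos]
      · nlinarith [hθ.2, Real.pi_pos]
    have hc : Real.cos (θ/2) ≠ 0 := by
      have := Real.cos_pos_of_mem_Ioo hθ2
      positivity
    have h1 : HasDerivAt (fun θ : ℝ => Real.tan (θ/2))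
        (1 / Real.cos (θ/2)^2 * (1/2)) θ := by
      have := (Real.hasDerivAt_tan hc).comp θ ((hasDerivAt_id θ).div_const 2)
      simpa [Function.comp_def] using this
    have h2 : HasDerivAt (fun θ : ℝ => (p * Real.tan (θ/2) + q)/D)
        ((p * (1 / Real.cos (θ/2)^2 * (1/2)))/D) θ :=
      (((h1.const_mul p).add_const q).div_const D)
    have h3 : HasDerivAt F
        ((2/D) * ((1 / (1 + ((p * Real.tan (θ/2) + q)/D)^2)) *
          ((p * (1 / Real.cos (θ/2)^2 * (1/2)))/D))) θ := by
      exact ((Real.hasDerivAt_arctan _).comp θ h2).const_mul (2/D)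
    convert h3 using 1
    have hsin : Real.sin θ = 2 * Real.sin (θ/2) * Real.cos (θ/2) := by
      rw [show θ = 2 * (θ/2) by ring, Real.sin_two_mul]
      ring_nf
    have hsc : Real.sin (θ/2)^2 = 1 - Real.cos (θ/2)^2 := by
      have := Real.sin_sq_add_cos_sq (θ/2); linarith
    have hne : p + q * (2 * Real.sin (θ/2) * Real.cos (θ/2)) ≠ 0 := by
      rw [← hsin]; exact (hpos θ).ne'
    rw [Real.tan_eq_sin_div_cos, hsin]
    field_simp
    rw [div_eq_iff (by convert hne using 1; ring)]
    linear_combination (Real.cos (θ/2)^2) * hD2 + (p^2) * hsc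
  have hcont : Continuous fun θ : ℝ => (p + q * Real.sin θ)⁻¹ := by
    apply Continuous.inv₀ (by continuity)
    intro θ; exact (hpos θ).ne'
  rw [intervalIntegral.integral_eq_sub_of_hasDerivAt hderiv
    (hcont.intervalIntegrable _ _)]
  have ht1 : Real.tan ((π/2)/2) = 1 := by
    rw [show (π/2)/2 = π/4 by ring, Real.tan_pi_div_four]
  have ht2 : Real.tan ((-(π/2))/2) = -1 := by
    rw [show (-(π/2))/2 = -(π/4) by ring, Real.tan_neg, Real.tan_pi_div_four]
  have harg : ((p + q)/D)⁻¹ = (p - q)/D := by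
    rw [inv_div]
    rw [div_eq_div_iff (by positivity) hD.ne']
    nlinarith [hD2]
  have hinv := Real.arctan_inv_of_pos (show 0 < (p+q)/D by positivity)
  rw [harg] at hinv
  have e1 : (p * (-1) + q)/D = -((p - q)/D) := by ring
  have : F (π/2) - F (-(π/2)) = (2/D) * (Real.arctan ((p+q)/D) + Real.arctan ((p-q)/D)) := by
    simp only [hF, ht1, ht2, mul_one, e1, Real.arctan_neg]
    ring
  rw [this, hinv]
  field_simp
  ring

lemma MP.aux_int_cossq (p q : ℝ) (hq : 0 < q) (hpq : q ≤ p) :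
    ∫ θ in (-(π/2))..(π/2), Real.cos θ^2 / (p + q * Real.sin θ)
      = π/q^2 * (p - Real.sqrt (p^2 - q^2)) := by
  rcases eq_or_lt_of_le hpq with heq | hlt
  · -- p = q case
    subst heq
    have hcongr : ∀ θ ∈ Set.uIoc (-(π/2)) (π/2),
        Real.cos θ^2 / (q + q * Real.sin θ) = (1 - Real.sin θ)/q := by
      intro θ hθ
      rw [Set.uIoc_of_le (by linarith [Real.pi_pos])] at hθ
      have hs : -1 < Real.sin θ := by
        have h := Real.strictMonoOn_sin
          (Set.mem_Icc.2 ⟨le_refl _, by linarith [Real.pi_pos]⟩)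
          (Set.mem_Icc.2 ⟨le_of_lt hθ.1, hθ.2⟩) hθ.1
        simpa using h
      have h1 : q + q * Real.sin θ ≠ 0 := by nlinarith
      have hc2 : Real.cos θ^2 = (1 - Real.sin θ) * (1 + Real.sin θ) := by
        have := Real.sin_sq_add_cos_sq θ; nlinarith
      have h2 : 1 + Real.sin θ ≠ 0 := by linarith
      rw [hc2]
      field_simp
    rw [intervalIntegral.integral_congr_ae (MeasureTheory.ae_of_all _ hcongr)]
    have : ∫ θ in (-(π/2))..(π/2), (1 - Real.sin θ)/q
        = (∫ θ in (-(π/2))..(π/2), (1 - Real.sin θ)) / q :=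
      intervalIntegral.integral_div q _
    rw [this, intervalIntegral.integral_sub intervalIntegrable_const
      (Continuous.intervalIntegrable Real.continuous_sin _ _),
      integral_sin, intervalIntegral.integral_const]
    simp [Real.cos_pi_div_two]
    field_simp
  · -- q < p case
    have hp : 0 < p := hq.trans hlt
    have hpos : ∀ θ : ℝ, 0 < p + q * Real.sin θ := by
      intro θ; nlinarith [Real.neg_one_le_sin θ, Real.sin_le_one θ]
    set D : ℝ := Real.sqrt (p^2 - q^2) with hDdef
    have hD2 : D^2 = p^2 - q^2 := Real.sq_sqrt (by nlinarith)
    have hD : 0 < D := Real.sqrt_pos.2 (by nlinarith)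
    have hcongr : Set.EqOn (fun θ => Real.cos θ^2 / (p + q * Real.sin θ))
        (fun θ => -Real.sin θ/q + p/q^2 + ((q^2-p^2)/q^2) * (p + q * Real.sin θ)⁻¹)
        (Set.uIcc (-(π/2)) (π/2)) := by
      intro θ _
      have h1 : p + q * Real.sin θ ≠ 0 := (hpos θ).ne'
      have hc2 : Real.cos θ^2 = 1 - Real.sin θ^2 := by
        have := Real.sin_sq_add_cos_sq θ; linarith
      have h1' : p + Real.sin θ * q ≠ 0 := by convert h1 using 1; ring
      simp only [hc2]
      field_simp
      ring
    rw [intervalIntegral.integral_congr hcongr]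
    have hi1 : IntervalIntegrable (fun θ => -Real.sin θ/q + p/q^2) volume (-(π/2)) (π/2) := by
      apply Continuous.intervalIntegrable; continuity
    have hi2 : IntervalIntegrable (fun θ => ((q^2-p^2)/q^2) * (p + q * Real.sin θ)⁻¹)
        volume (-(π/2)) (π/2) := by
      apply Continuous.intervalIntegrable
      exact continuous_const.mul ((Continuous.inv₀ (by continuity) (fun θ => (hpos θ).ne')))
    rw [intervalIntegral.integral_add hi1 hi2,
      intervalIntegral.integral_add
        ((Continuous.intervalIntegrable (by continuity) _ _))
        intervalIntegrable_const,
      intervalIntegral.integral_const_mul, MP.aux_int_inv p q hq hlt, ← hDdef]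
    have : ∫ θ in (-(π/2))..(π/2), -Real.sin θ/q = 0 := by
      have : (fun θ => -Real.sin θ/q) = fun θ => (-(1/q)) * Real.sin θ := by
        funext θ; ring
      rw [this, intervalIntegral.integral_const_mul, integral_sin]
      simp [Real.cos_pi_div_two]
    rw [this]
    rw [intervalIntegral.integral_const]
    have hq2 : (q:ℝ)^2 ≠ 0 := by positivity
    field_simp
    have hqp : q^2 * (p/q^2) = p := mul_div_cancel₀ p hq2
    rw [smul_eq_mul]
    linear_combination (π*D) * hqp + π * hD2

lemma MP.sin_mem {θ : ℝ} (hθ : θ ∈ Set.Ioo (-(π/2)) (π/2)) :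
    -1 < Real.sin θ ∧ Real.sin θ < 1 := by
  have hm : -(π/2) ∈ Set.Icc (-(π/2)) (π/2) :=
    Set.mem_Icc.2 ⟨le_refl _, by linarith [Real.pi_pos]⟩
  have hM : (π/2) ∈ Set.Icc (-(π/2)) (π/2) :=
    Set.mem_Icc.2 ⟨by linarith [Real.pi_pos], le_refl _⟩
  have hθ' : θ ∈ Set.Icc (-(π/2)) (π/2) := Set.mem_Icc.2 ⟨hθ.1.le, hθ.2.le⟩
  constructor
  · have := Real.strictMonoOn_sin hm hθ' hθ.1
    simpa using this
  · have := Real.strictMonoOn_sin hθ' hM hθ.2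
    simpa using this

lemma MP.image_sin (m r : ℝ) (hr : 0 < r) :
    (fun θ => m + r * Real.sin θ) '' Set.Ioo (-(π/2)) (π/2)
      = Set.Ioo (m - r) (m + r) := by
  ext x
  constructor
  · rintro ⟨θ, hθ, rfl⟩
    obtain ⟨h1, h2⟩ := MP.sin_mem hθ
    constructor <;> simp only [] <;> nlinarith
  · rintro ⟨h1, h2⟩
    have ht1 : -1 < (x - m)/r := by rw [lt_div_iff₀ hr]; linarith
    have ht2 : (x - m)/r < 1 := by rw [div_lt_one hr]; linarith
    refine ⟨Real.arcsin ((x-m)/r), ?_, ?_⟩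
    · exact ⟨Real.neg_pi_div_two_lt_arcsin.2 ht1, Real.arcsin_lt_pi_div_two.2 ht2⟩
    · show m + r * Real.sin (Real.arcsin ((x-m)/r)) = x
      rw [Real.sin_arcsin ht1.le ht2.le]
      field_simp
      ring

lemma MP.injOn_sin (m r : ℝ) (hr : 0 < r) :
    Set.InjOn (fun θ => m + r * Real.sin θ) (Set.Ioo (-(π/2)) (π/2)) := by
  intro θ₁ h1 θ₂ h2 he
  have hsin : Real.sin θ₁ = Real.sin θ₂ := by
    have : r * Real.sin θ₁ = r * Real.sin θ₂ := by simpa using he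
    exact mul_left_cancel₀ hr.ne' this
  exact Real.injOn_sin (Set.mem_Icc.2 ⟨h1.1.le, h1.2.le⟩)
    (Set.mem_Icc.2 ⟨h2.1.le, h2.2.le⟩) hsin

lemma MP.hasDeriv_sin (m r : ℝ) (θ : ℝ) :
    HasDerivAt (fun θ => m + r * Real.sin θ) (r * Real.cos θ) θ :=
  ((Real.hasDerivAt_sin θ).const_mul r).const_add m

lemma MP.integrable_cossq (p q : ℝ) (hq : 0 < q) (hpq : q ≤ p) :
    IntegrableOn (fun θ => Real.cos θ^2/(p + q*Real.sin θ))
      (Set.Ioo (-(π/2)) (π/2)) volume := by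
  apply Measure.integrableOn_of_bounded (M := 2/q)
  · exact measure_Ioo_lt_top.ne
  · exact (((Real.continuous_cos.pow 2).measurable).div
      ((continuous_const.add
        (continuous_const.mul Real.continuous_sin)).measurable)).aestronglyMeasurable
  · refine (ae_restrict_iff' measurableSet_Ioo).2 (MeasureTheory.ae_of_all _ ?_)
    intro θ hθ
    obtain ⟨h1, h2⟩ := MP.sin_mem hθ
    have hA : 0 < p + q*Real.sin θ := by nlinarith
    rw [Real.norm_eq_abs, abs_of_nonneg (by positivity), div_le_div_iff₀ hA hq]
    nlinarith [mul_nonneg hq.le (sq_nonneg (1+Real.sin θ)), Real.sin_sq_add_cos_sq θ]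

/-- The Marčenko–Pastur distribution with parameter `y > 0`: density
`(2πxy)⁻¹ √((b−x)(x−a))` on `[a,b]` with `a = (1−√y)²`, `b = (1+√y)²`,
plus a point mass of weight `1 − 1/y` at `0` when `y > 1`. -/
noncomputable def mpLaw (y : ℝ) : Measure ℝ :=
  (ENNReal.ofReal (1 - 1/y)) • Measure.dirac 0 +
    (volume.restrict (Set.Icc ((1 - Real.sqrt y)^2) ((1 + Real.sqrt y)^2))).withDensity
      (fun x => ENNReal.ofReal
        (Real.sqrt (((1 + Real.sqrt y)^2 - x) * (x - (1 - Real.sqrt y)^2))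
          / (2 * Real.pi * x * y)))

set_option maxHeartbeats 1000000 in
/-- Stieltjes transform of the Marčenko–Pastur law on the negative real axis:
`∫ (x+σ)⁻¹ dF_y(x) = m(σ)` for all `σ > 0`. -/
theorem mp_stieltjes_transform (y : ℝ) (hy : 0 < y) (σ : ℝ) (hσ : 0 < σ) :
    ∫ x, (x + σ)⁻¹ ∂(mpLaw y)
      = -((1 + σ - y - Real.sqrt ((1 + y + σ)^2 - 4*y)) / (2*y*σ)) := by
  have hπ := Real.pi_pos
  have hs : 0 < Real.sqrt y := Real.sqrt_pos.2 hy
  have hs2 : Real.sqrt y ^ 2 = y := Real.sq_sqrt hy.le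
  set s := Real.sqrt y with hsdef
  set a : ℝ := (1 - s)^2 with hadef
  set b : ℝ := (1 + s)^2 with hbdef
  set dens : ℝ → ℝ := fun x => Real.sqrt ((b - x) * (x - a)) / (2*π*x*y) with hdensdef
  set f : ℝ → ℝ := fun x => (x + σ)⁻¹ with hfdef
  set φ : ℝ → ℝ := fun θ => (1+y) + 2*s*Real.sin θ with hφdef
  have hab : a = (1+y) - 2*s := by rw [hadef, ← hs2]; ring
  have hbb : b = (1+y) + 2*s := by rw [hbdef, ← hs2]; ring
  have hr : 0 < 2*s := by linarith
  have ha0 : (0:ℝ) ≤ a := sq_nonneg _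
  have hp1 : 2*s ≤ 1+y := by nlinarith [sq_nonneg (1-s)]
  have hp2 : 2*s ≤ 1+y+σ := by linarith
  -- measurability of dens
  have hdens_meas : Measurable dens := by
    apply Measurable.div
    · exact (Real.continuous_sqrt.comp
        ((continuous_const.sub continuous_id).mul
          (continuous_id.sub continuous_const))).measurable
    · exact ((continuous_const.mul continuous_id).mul continuous_const).measurable
  set g₀ : ℝ → ℝ := fun x => max (dens x) 0 * f x with hg₀def
  have hg₀eq : (fun x => ((Real.toNNReal (dens x) : ℝ≥0) : ℝ) • f x) = g₀ := by
    funext x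
    rw [smul_eq_mul, Real.coe_toNNReal']
  -- pointwise identity on the θ side
  have hKeq : ∀ θ ∈ Set.Ioo (-(π/2)) (π/2),
      |2*s*Real.cos θ| * g₀ (φ θ)
        = (2*s^2/(π*y*σ)) * (Real.cos θ^2/((1+y) + 2*s*Real.sin θ)
            - Real.cos θ^2/((1+y+σ) + 2*s*Real.sin θ)) := by
    intro θ hθ
    obtain ⟨hs1, hs1'⟩ := MP.sin_mem hθ
    have hcos : 0 < Real.cos θ := Real.cos_pos_of_mem_Ioo hθ
    have hA : 0 < (1+y) + 2*s*Real.sin θ := by nlinarith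
    have hB : 0 < (1+y+σ) + 2*s*Real.sin θ := by nlinarith
    have hsq : (b - φ θ) * (φ θ - a) = (2*s*Real.cos θ)^2 := by
      rw [hab, hbb, hφdef]
      simp only []
      linear_combination (-(4*s^2)) * (Real.sin_sq_add_cos_sq θ)
    have hsqrt : Real.sqrt ((b - φ θ) * (φ θ - a)) = 2*s*Real.cos θ := by
      rw [hsq, Real.sqrt_sq (by positivity)]
    have hdφ : dens (φ θ) = 2*s*Real.cos θ / (2*π*(φ θ)*y) := by
      rw [hdensdef]; simp only []; rw [hsqrt]
    have hφA : φ θ = (1+y) + 2*s*Real.sin θ := rfl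
    have hdnn : 0 ≤ dens (φ θ) := by
      rw [hdφ, hφA]; positivity
    rw [hg₀def]
    simp only []
    rw [max_eq_left hdnn, hdφ, hfdef]
    simp only []
    rw [abs_of_pos (by positivity : (0:ℝ) < 2*s*Real.cos θ), hφA]
    have hBne : (1+y) + 2*s*Real.sin θ + σ = (1+y+σ) + 2*s*Real.sin θ := by ring
    rw [hBne]
    field_simp
    ring
  -- the image identity
  have himg : Set.Ioo a b = φ '' Set.Ioo (-(π/2)) (π/2) := by
    rw [MP.image_sin (1+y) (2*s) hr, hab, hbb]
  have hderivW : ∀ θ ∈ Set.Ioo (-(π/2)) (π/2),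
      HasDerivWithinAt φ (2*s*Real.cos θ) (Set.Ioo (-(π/2)) (π/2)) θ :=
    fun θ _ => (MP.hasDeriv_sin (1+y) (2*s) θ).hasDerivWithinAt
  have hinj := MP.injOn_sin (1+y) (2*s) hr
  -- measurability of the θ-side integrand
  have hKmeas : Measurable (fun θ => |2*s*Real.cos θ| * g₀ (φ θ)) := by
    apply Measurable.mul
    · exact ((continuous_const.mul Real.continuous_cos).abs).measurable
    · exact Measurable.comp
        ((hdens_meas.max measurable_const).mul ((measurable_id.add_const σ).inv))
        (continuous_const.add (continuous_const.mul Real.continuous_sin)).measurable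
  -- bound on the θ side
  have hbound : ∀ θ ∈ Set.Ioo (-(π/2)) (π/2),
      ‖|2*s*Real.cos θ| * g₀ (φ θ)‖ ≤ 2*s/(π*y*σ) := by
    intro θ hθ
    obtain ⟨hs1, hs1'⟩ := MP.sin_mem hθ
    have hcos : 0 < Real.cos θ := Real.cos_pos_of_mem_Ioo hθ
    have hA : 0 < (1+y) + 2*s*Real.sin θ := by nlinarith
    have hB : 0 < (1+y+σ) + 2*s*Real.sin θ := by nlinarith
    have hc2 : Real.cos θ^2 = 1 - Real.sin θ^2 := by
      have := Real.sin_sq_add_cos_sq θ; linarith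
    have hu1 : Real.cos θ^2/((1+y) + 2*s*Real.sin θ) ≤ 1/s := by
      rw [div_le_div_iff₀ hA hs]
      nlinarith [mul_nonneg hs.le (sq_nonneg (1+Real.sin θ))]
    have hu0 : 0 ≤ Real.cos θ^2/((1+y) + 2*s*Real.sin θ) := by positivity
    have hv1 : Real.cos θ^2/((1+y+σ) + 2*s*Real.sin θ) ≤ 1/s := by
      rw [div_le_div_iff₀ hB hs]
      nlinarith [mul_nonneg hs.le (sq_nonneg (1+Real.sin θ))]
    have hv0 : 0 ≤ Real.cos θ^2/((1+y+σ) + 2*s*Real.sin θ) := by positivity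
    rw [hKeq θ hθ, Real.norm_eq_abs, abs_mul,
      abs_of_pos (by positivity : (0:ℝ) < 2*s^2/(π*y*σ))]
    have : |Real.cos θ^2/((1+y) + 2*s*Real.sin θ)
        - Real.cos θ^2/((1+y+σ) + 2*s*Real.sin θ)| ≤ 1/s := by
      rw [abs_le]; constructor <;> linarith
    calc 2*s^2/(π*y*σ) * |Real.cos θ^2/((1+y) + 2*s*Real.sin θ)
        - Real.cos θ^2/((1+y+σ) + 2*s*Real.sin θ)|
        ≤ 2*s^2/(π*y*σ) * (1/s) := by
          apply mul_le_mul_of_nonneg_left this (by positivity)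
      _ = 2*s/(π*y*σ) * (s * (1/s)) := by ring
      _ = 2*s/(π*y*σ) := by rw [one_div, mul_inv_cancel₀ hs.ne', mul_one]
  -- integrability of the θ-side integrand on Ioo
  have hKint : IntegrableOn (fun θ => |2*s*Real.cos θ| * g₀ (φ θ))
      (Set.Ioo (-(π/2)) (π/2)) volume := by
    apply Measure.integrableOn_of_bounded (M := 2*s/(π*y*σ))
    · exact (measure_Ioo_lt_top).ne
    · exact hKmeas.aestronglyMeasurable
    · exact (ae_restrict_iff' measurableSet_Ioo).2 (MeasureTheory.ae_of_all _ hbound)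
  -- integrability of f wrt the density part
  have h2 : Integrable f ((volume.restrict (Set.Icc a b)).withDensity
      (fun x => ENNReal.ofReal (dens x))) := by
    rw [show (fun x => ENNReal.ofReal (dens x))
        = (fun x => ((Real.toNNReal (dens x) : ℝ≥0) : ℝ≥0∞)) from rfl,
      integrable_withDensity_iff_integrable_coe_smul hdens_meas.real_toNNReal,
      hg₀eq]
    have : IntegrableOn g₀ (Set.Icc a b) volume := by
      rw [integrableOn_Icc_iff_integrableOn_Ioo, himg,
        integrableOn_image_iff_integrableOn_abs_deriv_smul measurableSet_Ioo hderivW hinj]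
      simpa [smul_eq_mul] using hKint
    exact this
  -- integrability of f wrt the dirac part
  have h1 : Integrable f ((ENNReal.ofReal (1 - 1/y)) • Measure.dirac (0:ℝ)) := by
    apply Integrable.smul_measure _ ENNReal.ofReal_ne_top
    constructor
    · exact ((measurable_id.add_const σ).inv).aestronglyMeasurable
    · rw [hasFiniteIntegral_def, lintegral_dirac]
      exact ENNReal.coe_lt_top
  -- main computation
  have hlaw : mpLaw y = (ENNReal.ofReal (1 - 1/y)) • Measure.dirac 0 +
      (volume.restrict (Set.Icc a b)).withDensity (fun x => ENNReal.ofReal (dens x)) := rfl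
  rw [hlaw, integral_add_measure h1 h2]
  -- dirac part value
  have hdirac : ∫ x, f x ∂((ENNReal.ofReal (1 - 1/y)) • Measure.dirac (0:ℝ))
      = max (1 - 1/y) 0 * σ⁻¹ := by
    rw [integral_smul_measure, integral_dirac, ENNReal.toReal_ofReal']
    simp [hfdef]
  -- density part value
  have hdensval : ∫ x, f x ∂((volume.restrict (Set.Icc a b)).withDensity
      (fun x => ENNReal.ofReal (dens x)))
      = (2*s^2/(π*y*σ)) * ((π/(2*s)^2 * ((1+y) - |1-y|))
          - (π/(2*s)^2 * ((1+y+σ) - Real.sqrt ((1+y+σ)^2 - 4*y)))) := by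
    rw [show (fun x => ENNReal.ofReal (dens x))
        = (fun x => ((Real.toNNReal (dens x) : ℝ≥0) : ℝ≥0∞)) from rfl,
      integral_withDensity_eq_integral_smul hdens_meas.real_toNNReal]
    have : ∫ x in Set.Icc a b, (Real.toNNReal (dens x) : ℝ≥0) • f x
        = ∫ x in Set.Icc a b, g₀ x := by
      apply integral_congr_ae
      filter_upwards with x
      rw [← hg₀eq]
      simp [NNReal.smul_def]
    rw [this, integral_Icc_eq_integral_Ioo, himg,
      integral_image_eq_integral_abs_deriv_smul measurableSet_Ioo hderivW hinj]
    have : ∫ θ in Set.Ioo (-(π/2)) (π/2), |2*s*Real.cos θ| • g₀ (φ θ)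
        = ∫ θ in Set.Ioo (-(π/2)) (π/2), (2*s^2/(π*y*σ)) *
            (Real.cos θ^2/((1+y) + 2*s*Real.sin θ)
              - Real.cos θ^2/((1+y+σ) + 2*s*Real.sin θ)) := by
      apply setIntegral_congr_fun measurableSet_Ioo
      intro θ hθ
      simp only [smul_eq_mul]
      exact hKeq θ hθ
    rw [this, MeasureTheory.integral_const_mul]
    -- integrability of each piece
    have hiA : IntegrableOn (fun θ => Real.cos θ^2/((1+y) + 2*s*Real.sin θ))
        (Set.Ioo (-(π/2)) (π/2)) volume := MP.integrable_cossq (1+y) (2*s) hr hp1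
    have hiB : IntegrableOn (fun θ => Real.cos θ^2/((1+y+σ) + 2*s*Real.sin θ))
        (Set.Ioo (-(π/2)) (π/2)) volume := MP.integrable_cossq (1+y+σ) (2*s) hr hp2
    rw [integral_sub hiA hiB]
    have hIA : ∫ θ in Set.Ioo (-(π/2)) (π/2), Real.cos θ^2/((1+y) + 2*s*Real.sin θ)
        = π/(2*s)^2 * ((1+y) - |1-y|) := by
      rw [← integral_Ioc_eq_integral_Ioo,
        ← intervalIntegral.integral_of_le (by linarith : -(π/2) ≤ π/2),
        MP.aux_int_cossq (1+y) (2*s) hr hp1]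
      congr 2
      rw [show (1+y)^2 - (2*s)^2 = (1-y)^2 by linear_combination (-4) * hs2]
      exact Real.sqrt_sq_eq_abs _
    have hIB : ∫ θ in Set.Ioo (-(π/2)) (π/2), Real.cos θ^2/((1+y+σ) + 2*s*Real.sin θ)
        = π/(2*s)^2 * ((1+y+σ) - Real.sqrt ((1+y+σ)^2 - 4*y)) := by
      rw [← integral_Ioc_eq_integral_Ioo,
        ← intervalIntegral.integral_of_le (by linarith : -(π/2) ≤ π/2),
        MP.aux_int_cossq (1+y+σ) (2*s) hr hp2]
      congr 3
      linear_combination (-4) * hs2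
    rw [hIA, hIB]
  rw [hdirac, hdensval]
  -- final arithmetic
  clear_value s
  clear hKeq hbound hKint hKmeas himg hderivW hinj h1 h2 hg₀eq
  rcases le_or_gt y 1 with hcase | hcase
  · have h1 : max (1 - 1/y) 0 = 0 := by
      apply max_eq_right
      have : 1 ≤ 1/y := by rw [le_div_iff₀ hy]; linarith
      linarith
    have h2 : |1 - y| = 1 - y := abs_of_nonneg (by linarith)
    rw [h1, h2]
    field_simp
    ring
  · have h1 : max (1 - 1/y) 0 = 1 - 1/y := by
      apply max_eq_left
      have : 1/y < 1 := by rw [div_lt_one hy]; linarith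
      linarith
    have h2 : |1 - y| = y - 1 := by
      rw [abs_of_nonpos (by linarith)]; ring
    rw [h1, h2]
    field_simp
    ring
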